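/- Pure entangled QCCEs exist in maximally-entangled common-payoff games (Appendix D Corollary): Fix a real payoff matrix (a_{pq}) indexed by p,q ∈ {0,1} and let R = Σ_{p,q} a_{pq}·|e_{pq}⟩⟨e_{pq}| where {|e_{pq}⟩} is the Bell basis of ℂ²⊗ℂ²; consider the common-payoff two-player quantum game in which both players' utility at joint density matrix ρ is Tr(R ρ). If (p*,q*) satisfies a_{p*q*} ≥ (1/4)·Σ_{p,q} a_{pq} (in particular, if a_{p*q*} = max_{p,q} a_{pq}), then the pure maximally-entangled state ρ* = |e_{p*q*}⟩⟨e_{p*q*}| is a quantum coarse correlated equilibrium: Tr(R·(ρ_1' ⊗ Tr_A ρ*)) ≤ Tr(R·ρ*) for all density matrices ρ_1' on ℂ², and Tr(R·((Tr_B ρ*) ⊗ ρ_2')) ≤ Tr(R·ρ*) for all density matrices ρ_2' on ℂ². -/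

import Mathlib

open Matrix Kronecker
open scoped ComplexOrder

/-- A density matrix: positive semidefinite with trace 1. -/
def IsDensity {d : Type*} [Fintype d] (ρ : Matrix d d ℂ) : Prop :=
  ρ.PosSemidef ∧ ρ.trace = 1

/-- The Bell basis vector `|e_{pq}⟩` of `ℂ²⊗ℂ²`:
`e_{pq}(a,b) = (−1)^{q·a}/√2` if `b = a + p` (mod 2), and `0` otherwise. -/
noncomputable def bell (p q : Fin 2) : Fin 2 × Fin 2 → ℂ :=
  fun ab => if ab.2 = ab.1 + p then ((-1 : ℂ) ^ (q.val * ab.1.val)) / (Real.sqrt 2 : ℂ) else 0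

/-- The rank-one projection `|e_{pq}⟩⟨e_{pq}|`. -/
noncomputable def bellProj (p q : Fin 2) :
    Matrix (Fin 2 × Fin 2) (Fin 2 × Fin 2) ℂ :=
  fun x y => bell p q x * (starRingEnd ℂ) (bell p q y)

/-- Partial trace over the first register (the marginal on Bob's register). -/
noncomputable def trA (M : Matrix (Fin 2 × Fin 2) (Fin 2 × Fin 2) ℂ) :
    Matrix (Fin 2) (Fin 2) ℂ :=
  fun b b' => ∑ a, M (a, b) (a, b')

/-- Partial trace over the second register (the marginal on Alice's register). -/
noncomputable def trB (M : Matrix (Fin 2 × Fin 2) (Fin 2 × Fin 2) ℂ) :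
    Matrix (Fin 2) (Fin 2) ℂ :=
  fun a a' => ∑ b, M (a, b) (a', b)

lemma sqrt2_sq : (Real.sqrt 2 : ℂ) * (Real.sqrt 2 : ℂ) = 2 := by
  norm_cast
  rw [Real.mul_self_sqrt (by norm_num)]

lemma bellProj_apply (p q : Fin 2) (x y : Fin 2 × Fin 2) :
    bellProj p q x y =
      if x.2 = x.1 + p ∧ y.2 = y.1 + p then
        ((-1 : ℂ) ^ (q.val * x.1.val + q.val * y.1.val)) / 2 else 0 := by
  simp only [bellProj, bell]
  split_ifs with h1 h2 h3 h3 <;>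
    simp_all [map_div₀, Complex.conj_ofReal, pow_add]
  field_simp
  rw [sq, sqrt2_sq]

lemma trA_bellProj (p q : Fin 2) : trA (bellProj p q) = (2:ℂ)⁻¹ • 1 := by
  funext b b'
  fin_cases p <;> fin_cases q <;> fin_cases b <;> fin_cases b' <;>
    simp [trA, Fin.sum_univ_two, bellProj_apply, Matrix.one_apply]

lemma trB_bellProj (p q : Fin 2) : trB (bellProj p q) = (2:ℂ)⁻¹ • 1 := by
  funext b b'
  fin_cases p <;> fin_cases q <;> fin_cases b <;> fin_cases b' <;>
    simp [trB, Fin.sum_univ_two, bellProj_apply, Matrix.one_apply]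

lemma trace_proj_mul (p q p' q' : Fin 2) :
    (bellProj p q * bellProj p' q').trace = if p = p' ∧ q = q' then 1 else 0 := by
  fin_cases p <;> fin_cases q <;> fin_cases p' <;> fin_cases q' <;>
    simp [Matrix.trace, Matrix.mul_apply, Fintype.sum_prod_type, Fin.sum_univ_two,
      bellProj_apply, Matrix.diag] <;> norm_num

lemma trace_proj_kron_right (p q : Fin 2) (X : Matrix (Fin 2) (Fin 2) ℂ) :
    (bellProj p q * (X ⊗ₖ ((2:ℂ)⁻¹ • (1 : Matrix (Fin 2) (Fin 2) ℂ)))).trace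
      = X.trace / 4 := by
  fin_cases p <;> fin_cases q <;>
    simp [Matrix.trace, Matrix.mul_apply, Fintype.sum_prod_type, Fin.sum_univ_two,
      bellProj_apply, Matrix.diag, Matrix.kroneckerMap_apply, Matrix.one_apply] <;> ring

lemma trace_proj_kron_left (p q : Fin 2) (X : Matrix (Fin 2) (Fin 2) ℂ) :
    (bellProj p q * (((2:ℂ)⁻¹ • (1 : Matrix (Fin 2) (Fin 2) ℂ)) ⊗ₖ X)).trace
      = X.trace / 4 := by
  fin_cases p <;> fin_cases q <;>
    simp [Matrix.trace, Matrix.mul_apply, Fintype.sum_prod_type, Fin.sum_univ_two,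
      bellProj_apply, Matrix.diag, Matrix.kroneckerMap_apply, Matrix.one_apply] <;> ring


/-- Pure entangled QCCEs exist in maximally-entangled common-payoff games
(Appendix D Corollary). -/
theorem stmt_14 (a : Fin 2 → Fin 2 → ℝ) (ps qs : Fin 2)
    (hmax : (1 / 4 : ℝ) * ∑ p, ∑ q, a p q ≤ a ps qs) :
    let R : Matrix (Fin 2 × Fin 2) (Fin 2 × Fin 2) ℂ :=
      ∑ p, ∑ q, (a p q : ℂ) • bellProj p q
    let ρstar : Matrix (Fin 2 × Fin 2) (Fin 2 × Fin 2) ℂ := bellProj ps qs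
    (∀ ρ₁' : Matrix (Fin 2) (Fin 2) ℂ, IsDensity ρ₁' →
      ((R * (ρ₁' ⊗ₖ trA ρstar)).trace).re ≤ ((R * ρstar).trace).re)
    ∧ (∀ ρ₂' : Matrix (Fin 2) (Fin 2) ℂ, IsDensity ρ₂' →
      ((R * ((trB ρstar) ⊗ₖ ρ₂')).trace).re ≤ ((R * ρstar).trace).re) := by
  intro R ρstar
  have hR : ∀ M, (R * M).trace = ∑ p, ∑ q, (a p q : ℂ) * (bellProj p q * M).trace := by
    intro M
    simp only [R, Finset.sum_mul, Matrix.smul_mul, Matrix.trace_sum, Matrix.trace_smul,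
      smul_eq_mul]
  have hRρ : ((R * ρstar).trace).re = a ps qs := by
    rw [hR]
    fin_cases ps <;> fin_cases qs <;>
      simp [ρstar, trace_proj_mul, Fin.sum_univ_two]
  refine ⟨fun ρ₁' hρ => ?_, fun ρ₂' hρ => ?_⟩
  · have : (R * (ρ₁' ⊗ₖ trA ρstar)).trace = ((∑ p, ∑ q, a p q : ℝ) : ℂ) / 4 := by
      rw [show trA ρstar = (2:ℂ)⁻¹ • 1 from trA_bellProj ps qs, hR]
      simp only [trace_proj_kron_right, hρ.2]
      simp [Fin.sum_univ_two]
      ring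
    rw [this, hRρ]
    rw [show ((∑ p, ∑ q, a p q : ℝ) : ℂ) / 4 = (((∑ p, ∑ q, a p q : ℝ) / 4 : ℝ) : ℂ) by
      push_cast; ring, Complex.ofReal_re]
    linarith
  · have : (R * ((trB ρstar) ⊗ₖ ρ₂')).trace = ((∑ p, ∑ q, a p q : ℝ) : ℂ) / 4 := by
      rw [show trB ρstar = (2:ℂ)⁻¹ • 1 from trB_bellProj ps qs, hR]
      simp only [trace_proj_kron_left, hρ.2]
      simp [Fin.sum_univ_two]
      ring
    rw [this, hRρ]
    rw [show ((∑ p, ∑ q, a p q : ℝ) : ℂ) / 4 = (((∑ p, ∑ q, a p q : ℝ) / 4 : ℝ) : ℂ) by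
      push_cast; ring, Complex.ofReal_re]
    linarith
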